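/- With 𝒫 as in the block formula, for all x, y, u, v ∈ S² the Frobenius distance satisfies ‖𝒫(x,y) − 𝒫(u,v)‖_F = ‖xyᵀ − uvᵀ‖_F, i.e., 𝒫 is distance preserving from rank-one matrices to Grassmannian projections. -/
import Mathlib


open Matrix

/-- The parametrization `𝒫 : S² × S² → ℝ^{4×4}` given in block form by
`𝒫(x,y) = (1/2)[[1 + xᵀy, -(x×y)ᵀ],[-(x×y), xyᵀ + yxᵀ + (1-xᵀy)I₃]]`. -/
noncomputable def Pmat (x y : Fin 3 → ℝ) : Matrix (Fin 4) (Fin 4) ℝ :=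
  let d : ℝ := x 0 * y 0 + x 1 * y 1 + x 2 * y 2
  let c : Fin 3 → ℝ :=
    ![x 1 * y 2 - x 2 * y 1, x 2 * y 0 - x 0 * y 2, x 0 * y 1 - x 1 * y 0]
  (1 / 2 : ℝ) •
    !![1 + d, -c 0, -c 1, -c 2;
       -c 0, x 0 * y 0 + y 0 * x 0 + (1 - d), x 0 * y 1 + y 0 * x 1, x 0 * y 2 + y 0 * x 2;
       -c 1, x 1 * y 0 + y 1 * x 0, x 1 * y 1 + y 1 * x 1 + (1 - d), x 1 * y 2 + y 1 * x 2;
       -c 2, x 2 * y 0 + y 2 * x 0, x 2 * y 1 + y 2 * x 1, x 2 * y 2 + y 2 * x 2 + (1 - d)]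

/-- The outer product `xyᵀ ∈ ℝ^{3×3}`. -/
noncomputable def outer (x y : Fin 3 → ℝ) : Matrix (Fin 3) (Fin 3) ℝ :=
  Matrix.of fun i j => x i * y j

/-- `𝒫` is distance preserving with respect to the Frobenius norm:
`‖𝒫(x,y) - 𝒫(u,v)‖_F = ‖xyᵀ - uvᵀ‖_F` for unit vectors `x, y, u, v ∈ S²`. -/
theorem Pmat_frobenius_isometry (x y u v : Fin 3 → ℝ)
    (hx : x 0 ^ 2 + x 1 ^ 2 + x 2 ^ 2 = 1) (hy : y 0 ^ 2 + y 1 ^ 2 + y 2 ^ 2 = 1)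
    (hu : u 0 ^ 2 + u 1 ^ 2 + u 2 ^ 2 = 1) (hv : v 0 ^ 2 + v 1 ^ 2 + v 2 ^ 2 = 1) :
    Real.sqrt (Matrix.trace ((Pmat x y - Pmat u v)ᵀ * (Pmat x y - Pmat u v))) =
    Real.sqrt (Matrix.trace ((outer x y - outer u v)ᵀ * (outer x y - outer u v))) := by
  congr 1
  simp only [Pmat, outer, Matrix.trace, Matrix.diag, Matrix.mul_apply,
    Matrix.sub_apply, Matrix.transpose_apply, Matrix.smul_apply, Matrix.of_apply,
    Fin.sum_univ_succ, Fin.sum_univ_zero, Matrix.cons_val', Matrix.cons_val_zero,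
    Matrix.cons_val_one, Matrix.head_cons, Matrix.head_fin_const, Matrix.empty_val',
    Matrix.cons_val_fin_one, Matrix.cons_val_succ, smul_eq_mul,
    Fin.succ_zero_eq_one, Fin.succ_one_eq_two, Matrix.cons_val_two, Matrix.tail_cons]
  ring
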